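/- The number of positive indexing matrices (including the degenerate one) equals the n-th Catalan number C_n = (1/(n+1))·C(2n,n). -/

import Mathlib

open Finset

/-- `l` encodes a (non-degenerate) indexing matrix on `n` points: the columns,
listed left to right, as pairs `(top entry, bottom entry)`.  Entries lie in
`[0, n-1]`, the first row is strictly increasing, the second row is weakly
increasing, repeated second-row entries are `0`, and each top entry is at
least the corresponding bottom entry. -/
def IsIndexingMatrix (n : ℕ) (l : List (ℕ × ℕ)) : Prop :=
  1 ≤ l.length ∧ l.length ≤ n ∧
  (∀ p ∈ l, p.1 < n ∧ p.2 ≤ p.1) ∧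
  l.Pairwise (fun p q => p.1 < q.1 ∧ p.2 ≤ q.2 ∧ (p.2 = q.2 → p.2 = 0))

/-- A positive indexing matrix: all entries are positive. -/
def IsPositiveIndexingMatrix (n : ℕ) (l : List (ℕ × ℕ)) : Prop :=
  IsIndexingMatrix n l ∧ ∀ p ∈ l, 0 < p.1 ∧ 0 < p.2

/-- `θ_k^{(n)}`: the number of positive indexing matrices whose `(1,1)` entry
equals `k`. -/
noncomputable def theta (n k : ℕ) : ℕ :=
  Nat.card {l : List (ℕ × ℕ) //
    IsPositiveIndexingMatrix n l ∧ l.head?.map Prod.fst = some k}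

/-- The blob-rank of an indexing matrix: the number of its columns containing
a `0`. -/
def blobRank (l : List (ℕ × ℕ)) : ℕ := l.countP (fun p => p.1 == 0 || p.2 == 0)

/-- `Ω_r^{(n)}`: the number of indexing matrices on `n` points of blob-rank `r`,
the degenerate indexing matrix being counted in `Ω_0^{(n)}`. -/
noncomputable def Omega (n r : ℕ) : ℕ :=
  Nat.card {l : List (ℕ × ℕ) // IsIndexingMatrix n l ∧ blobRank l = r} +
    (if r = 0 then 1 else 0)

/-- `χ_k^{(n)} = Σ_{i₁+⋯+i_k = n-k} C_{i₁} ⋯ C_{i_k}` (Catalan numbers). -/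
def chi (n k : ℕ) : ℕ :=
  ∑ t ∈ Finset.Nat.antidiagonalTuple k (n - k), ∏ j, catalan (t j)

/-- A Temperley–Lieb diagram on `n` points: a non-crossing perfect matching of
`2n` boundary points numbered clockwise, given by a fixed-point free
involution. -/
structure TLDiagram (n : ℕ) where
  f : Fin (2 * n) → Fin (2 * n)
  involutive : ∀ x, f (f x) = x
  noFixedPoint : ∀ x, f x ≠ x
  noncrossing : ∀ a b : Fin (2 * n), a < b → b < f a → f a < f b → False

/-- `a` is the left (smaller) endpoint of an arc of `D`. -/
def TLDiagram.IsArc {n : ℕ} (D : TLDiagram n) (a : Fin (2 * n)) : Prop :=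
  a < D.f a

/-- The arc with left endpoint `a` is exposed to the left side of the diagram,
i.e. it is not nested inside any other arc. -/
def TLDiagram.IsExposed {n : ℕ} (D : TLDiagram n) (a : Fin (2 * n)) : Prop :=
  a < D.f a ∧ ∀ c, ¬ (c < a ∧ D.f a < D.f c)

/-- The number of arcs of `D` exposed to the left side. -/
noncomputable def exposedCount {n : ℕ} (D : TLDiagram n) : ℕ :=
  Nat.card {a : Fin (2 * n) // D.IsExposed a}

/-- A `d`-abacus blob diagram on `n` points: a TL-diagram together with blobs
on some arcs exposed to the left, one bead count in `ℤ/dℤ` on every arc, and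
an extra bead count on every blobbed arc (its second component). -/
structure AbacusBlobDiagram (d n : ℕ) where
  base : TLDiagram n
  blob : Fin (2 * n) → Bool
  blob_exposed : ∀ a, blob a = true → base.IsExposed a
  beads₁ : Fin (2 * n) → ZMod d
  beads₂ : Fin (2 * n) → ZMod d
  beads₁_arc : ∀ a, ¬ base.IsArc a → beads₁ a = 0
  beads₂_blob : ∀ a, blob a = false → beads₂ a = 0

/-- A `d`-abacus hook diagram on `n` points: a blobbed TL-diagram in which all
blobbed arcs are merged into the single hook component through `0, 0'`, with a
bead count in `ℤ/dℤ` on every unblobbed arc and one on the hook component. -/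
structure AbacusHookDiagram (d n : ℕ) where
  base : TLDiagram n
  blob : Fin (2 * n) → Bool
  blob_exposed : ∀ a, blob a = true → base.IsExposed a
  beads : Fin (2 * n) → ZMod d
  beads_arc : ∀ a, ¬ base.IsArc a ∨ blob a = true → beads a = 0
  hookBeads : ZMod d


namespace Stmt1Aux

open List DyckStep

/-- The Dyck-path word of a matrix, given the previous valley `p` and size `n`. -/
def go (n : ℕ) : ℕ × ℕ → List (ℕ × ℕ) → List DyckStep
  | p, [] => replicate (n - p.1) U ++ replicate (n - p.2) D
  | p, q :: t => replicate (q.1 - p.1) U ++ (replicate (q.2 - p.2) D ++ go n q t)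

/-- Extract valleys (counts of `U`s and `D`s at each `DU` boundary). -/
def parse : ℕ → ℕ → List DyckStep → List (ℕ × ℕ)
  | _, _, [] => []
  | u, d, U :: t => parse (u + 1) d t
  | _, _, [D] => []
  | u, d, D :: D :: t => parse u (d + 1) (D :: t)
  | u, d, D :: U :: t => (u, d + 1) :: parse u (d + 1) (U :: t)

@[simp] lemma parse_nil (u d : ℕ) : parse u d [] = [] := by simp [parse]
@[simp] lemma parse_consU (u d : ℕ) (t) : parse u d (U :: t) = parse (u + 1) d t := by
  simp [parse]
@[simp] lemma parse_D_nil (u d : ℕ) : parse u d [D] = [] := by simp [parse]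
@[simp] lemma parse_DD (u d : ℕ) (t) : parse u d (D :: D :: t) = parse u (d + 1) (D :: t) := by
  simp [parse]
@[simp] lemma parse_DU (u d : ℕ) (t) :
    parse u d (D :: U :: t) = (u, d + 1) :: parse u (d + 1) (U :: t) := by
  simp [parse]

lemma parse_repU (p : ℕ) : ∀ (u d : ℕ) (w : List DyckStep),
    parse u d (replicate p U ++ w) = parse (u + p) d w := by
  induction p with
  | zero => simp
  | succ p ih =>
    intro u d w
    rw [replicate_succ, cons_append, parse_consU, ih]
    ring_nf

lemma parse_repD_nil (q : ℕ) : ∀ (u d : ℕ), parse u d (replicate q D) = [] := by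
  induction q with
  | zero => simp
  | succ q ih =>
    intro u d
    cases q with
    | zero => simp
    | succ q' =>
      rw [replicate_succ, replicate_succ, parse_DD, ← replicate_succ, ih]

lemma parse_repD_consU (q : ℕ) : ∀ (u d : ℕ) (t : List DyckStep), 1 ≤ q →
    parse u d (replicate q D ++ (U :: t)) = (u, d + q) :: parse u (d + q) (U :: t) := by
  induction q with
  | zero => omega
  | succ q ih =>
    intro u d t _
    cases q with
    | zero => simp
    | succ q' =>
      rw [replicate_succ, cons_append, show replicate (q' + 1) D ++ (U :: t)
        = D :: (replicate q' D ++ (U :: t)) by rw [replicate_succ, cons_append], parse_DD,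
        ← cons_append, ← replicate_succ, ih _ _ _ (by omega)]
      have h1 : d + 1 + (q' + 1) = d + (q' + 1 + 1) := by omega
      rw [h1]

@[simp] lemma count_U_repU (m : ℕ) : count U (replicate m U) = m := by simp
@[simp] lemma count_D_repD (m : ℕ) : count D (replicate m D) = m := by simp
@[simp] lemma count_U_repD (m : ℕ) : count U (replicate m D) = 0 := by
  simp [count_replicate]
@[simp] lemma count_D_repU (m : ℕ) : count D (replicate m U) = 0 := by
  simp [count_replicate]

/-- Invariant relation between successive valleys. -/
def R (n : ℕ) (p q : ℕ × ℕ) : Prop := p.1 < q.1 ∧ p.2 < q.2 ∧ q.2 ≤ q.1 ∧ q.1 < n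

instance (n : ℕ) : IsTrans (ℕ × ℕ) (R n) :=
  ⟨fun _ _ _ h₁ h₂ => ⟨h₁.1.trans h₂.1, h₁.2.1.trans h₂.2.1, h₂.2.2⟩⟩

lemma go_head (n : ℕ) (c : ℕ × ℕ) (t : List (ℕ × ℕ))
    (h : match t with | [] => c.1 < n | p :: _ => c.1 < p.1) :
    ∃ r, go n c t = U :: r := by
  cases t with
  | nil =>
    refine ⟨replicate (n - c.1 - 1) U ++ replicate (n - c.2) D, ?_⟩
    rw [go, show n - c.1 = (n - c.1 - 1) + 1 by omega, replicate_succ, cons_append]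
    simp
  | cons p t =>
    refine ⟨replicate (p.1 - c.1 - 1) U ++ (replicate (p.2 - c.2) D ++ go n p t), ?_⟩
    rw [go, show p.1 - c.1 = (p.1 - c.1 - 1) + 1 by omega, replicate_succ, cons_append]
    simp

lemma parse_go (n : ℕ) : ∀ (l : List (ℕ × ℕ)) (a b : ℕ), Chain (R n) (a, b) l →
    parse a b (go n (a, b) l) = l := by
  intro l
  induction l with
  | nil => intro a b _; rw [go, parse_repU, parse_repD_nil]
  | cons c t ih =>
    intro a b hch
    rw [Chain, isChain_cons_cons] at hch
    obtain ⟨⟨h1, h2, h3, h4⟩, hch⟩ := hch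
    obtain ⟨r, hr⟩ := go_head n c t (by
      cases t with
      | nil => exact h4
      | cons p t' => exact ((isChain_cons_cons.mp hch).1).1)
    rw [go, parse_repU, show a + (c.1 - a) = c.1 by omega, hr,
      parse_repD_consU _ _ _ _ (by omega), show b + (c.2 - b) = c.2 by omega, ← hr,
      ih c.1 c.2 (by rwa [Prod.mk.eta])]

lemma count_go (n : ℕ) : ∀ (l : List (ℕ × ℕ)) (a b : ℕ), Chain (R n) (a, b) l →
    a ≤ n → b ≤ a →
    count U (go n (a, b) l) = n - a ∧ count D (go n (a, b) l) = n - b := by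
  intro l
  induction l with
  | nil =>
    intro a b _ _ _
    rw [go]
    simp [count_append, count_replicate]
  | cons c t ih =>
    intro a b hch ha hba
    rw [Chain, isChain_cons_cons] at hch
    obtain ⟨⟨h1, h2, h3, h4⟩, hch⟩ := hch
    obtain ⟨hu, hd⟩ := ih c.1 c.2 (by rwa [Prod.mk.eta]) (by omega) h3
    rw [go]
    simp [count_append, count_replicate, hu, hd]
    omega


lemma go_prefix (n : ℕ) : ∀ (l : List (ℕ × ℕ)) (a b : ℕ), Chain (R n) (a, b) l →
    a ≤ n → b ≤ a → ∀ i : ℕ,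
    b + count D (take i (go n (a, b) l)) ≤ a + count U (take i (go n (a, b) l)) := by
  intro l
  induction l with
  | nil =>
    intro a b _ ha hba i
    rw [go]
    simp [take_append, take_replicate, count_append, count_replicate]
    omega
  | cons c t ih =>
    intro a b hch ha hba i
    rw [Chain, isChain_cons_cons] at hch
    obtain ⟨⟨h1, h2, h3, h4⟩, hch⟩ := hch
    have key := ih c.1 c.2 (by rwa [Prod.mk.eta]) (by omega) h3 (i - (c.1 - a) - (c.2 - b))
    have h0 : i - (c.1 - a) - (c.2 - b) = 0 →
        take (i - (c.1 - a) - (c.2 - b)) (go n c t) = [] := by intro h; rw [h, take_zero]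
    rw [go]
    simp only [take_append, take_replicate, count_append, count_replicate,
      length_replicate] at key ⊢
    rcases le_or_gt i ((c.1 - a) + (c.2 - b)) with hc | hc
    · rw [h0 (by omega)] at key ⊢
      simp at key ⊢
      omega
    · simp at key ⊢
      omega


lemma leading_run (s : DyckStep) : ∀ (w : List DyckStep), ∃ p r, w = replicate p s ++ r ∧
    (∀ x t, r = x :: t → x ≠ s) ∧ (∀ x t, w = x :: t → x = s → 1 ≤ p) := by
  intro w
  induction w with
  | nil => exact ⟨0, [], rfl, by simp, by simp⟩
  | cons x t ih =>
    by_cases hx : x = s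
    · obtain ⟨p, r, h1, h2, _⟩ := ih
      exact ⟨p + 1, r, by rw [replicate_succ, cons_append, hx, h1], h2, fun _ _ _ _ => by omega⟩
    · exact ⟨0, x :: t, rfl, fun y u hy => by injection hy with h1 _; exact h1 ▸ hx,
        fun y u hy hys => by injection hy with h1 _; exact absurd (h1 ▸ hys) hx⟩

lemma count_repU_repD (p q : ℕ) (w : List DyckStep) :
    count U (replicate p U ++ (replicate q D ++ w)) = p + count U w ∧
    count D (replicate p U ++ (replicate q D ++ w)) = q + count D w := by
  simp [count_append, count_replicate]

lemma main (n : ℕ) : ∀ (k : ℕ) (w : List DyckStep), w.length ≤ k → ∀ u d : ℕ,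
    u + count U w = n → d + count D w = n →
    (∀ i, d + count D (take i w) ≤ u + count U (take i w)) →
    (∀ x t, w = x :: t → x = U) →
    go n (u, d) (parse u d w) = w ∧ Chain (R n) (u, d) (parse u d w) := by
  intro k
  induction k with
  | zero =>
    intro w hlen u d hU hD _ _
    have hw : w = [] := length_eq_zero_iff.mp (by omega)
    subst hw
    simp only [count_nil] at hU hD
    rw [parse_nil, go]
    constructor
    · simp; omega
    · exact Chain.nil
  | succ k ih =>
    intro w hlen u d hU hD hpre hhead
    rcases w with _ | ⟨x, t⟩
    · simp only [count_nil] at hU hD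
      rw [parse_nil, go]
      constructor
      · simp; omega
      · exact Chain.nil
    have hx : x = U := hhead x t rfl
    obtain ⟨p, r, hw, hr, hp⟩ := leading_run U (x :: t)
    have hp1 : 1 ≤ p := hp x t rfl hx
    obtain ⟨q, r2, hr2, hr2h, hq⟩ := leading_run D r
    rcases r2 with _ | ⟨y, t2⟩
    · -- w = U^p ++ D^q
      rw [append_nil] at hr2
      subst hr2
      rw [hw] at hU hD ⊢
      obtain ⟨hcu, hcd⟩ := count_repU_repD p q []
      rw [append_nil] at hcu hcd
      rw [hcu] at hU; rw [hcd] at hD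
      simp only [count_nil] at hU hD
      rw [parse_repU, parse_repD_nil, go]
      constructor
      · rw [show n - u = p by omega, show n - d = q by omega]
      · exact Chain.nil
    · -- r2 = y :: t2 with y = U
      have hy : y = U := by
        rcases (y.dichotomy) with h | h
        · exact h
        · exact absurd h (hr2h y t2 rfl)
      subst hy
      have hq1 : 1 ≤ q := by
        rcases Nat.eq_zero_or_pos q with h | h
        · exfalso
          rw [h] at hr2
          simp only [replicate_zero, nil_append] at hr2
          exact hr (U) t2 hr2 rfl
        · exact h
      rw [hr2] at hw
      -- w = replicate p U ++ (replicate q D ++ (U :: t2))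
      obtain ⟨hcu, hcd⟩ := count_repU_repD p q (U :: t2)
      rw [hw] at hU hD
      rw [hcu] at hU; rw [hcd] at hD
      have hlen2 : (U :: t2).length ≤ k := by
        have h3 : (x :: t).length = p + (q + (U :: t2).length) := by
          rw [hw]; simp [length_append]
        simp only [length_cons] at h3 hlen ⊢
        omega
      have hpre2 : ∀ i, (d + q) + count D (take i (U :: t2)) ≤
          (u + p) + count U (take i (U :: t2)) := by
        intro i
        have h2 := hpre (p + q + i)
        rw [hw] at h2
        simp only [take_append, take_replicate, count_append,
          length_replicate, count_U_repU, count_D_repD, count_U_repD,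
          count_D_repU] at h2
        rw [show p + q + i - p - q = i by omega] at h2
        omega
      have hU2 : (u + p) + count U (U :: t2) = n := by omega
      have hD2 : (d + q) + count D (U :: t2) = n := by omega
      obtain ⟨ih1, ih2⟩ := ih (U :: t2) hlen2 (u + p) (d + q) hU2 hD2 hpre2
        (fun x' t' h' => by rw [cons.injEq] at h'; exact h'.1.symm)
      rw [hw, parse_repU, parse_repD_consU _ _ _ _ hq1]
      constructor
      · rw [go, ih1]
        simp only [show u + p - u = p by omega, show d + q - d = q by omega]
      · refine Chain.cons ?_ ih2
        refine ⟨by omega, by omega, ?_, ?_⟩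
        · have := hpre2 0
          simp at this
          omega
        · have : count U (U :: t2) ≥ 1 := by
            simp [count_cons]
          omega


lemma chain_length {n : ℕ} {l : List (ℕ × ℕ)} (h : Chain (R n) (0, 0) l) : l.length ≤ n := by
  have hp : Pairwise (R n) ((0, 0) :: l) := List.IsChain.pairwise h
  have hfst : Pairwise (· < ·) (l.map Prod.fst) :=
    (List.pairwise_cons.mp hp).2.map Prod.fst (fun _ _ hab => hab.1)
  have hnd : (l.map Prod.fst).Nodup := List.Pairwise.nodup hfst
  have hsub : (l.map Prod.fst).toFinset ⊆ Finset.range n := by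
    intro x hx
    rw [List.mem_toFinset, List.mem_map] at hx
    obtain ⟨p, hpl, rfl⟩ := hx
    exact Finset.mem_range.mpr ((List.pairwise_cons.mp hp).1 p hpl).2.2.2
  have := Finset.card_le_card hsub
  rw [List.toFinset_card_of_nodup hnd, List.length_map, Finset.card_range] at this
  exact this

lemma chain_to_matrix {n : ℕ} {l : List (ℕ × ℕ)} (h : Chain (R n) (0, 0) l)
    (hne : l ≠ []) : IsPositiveIndexingMatrix n l := by
  have hp : Pairwise (R n) ((0, 0) :: l) := List.IsChain.pairwise h
  obtain ⟨hhead, htail⟩ := List.pairwise_cons.mp hp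
  refine ⟨⟨?_, chain_length h, ?_, ?_⟩, ?_⟩
  · cases l with
    | nil => exact absurd rfl hne
    | cons a t => simp
  · exact fun p hpl => ⟨(hhead p hpl).2.2.2, (hhead p hpl).2.2.1⟩
  · exact htail.imp (fun {a b} hab => ⟨hab.1, le_of_lt hab.2.1, fun he => absurd he (Nat.ne_of_lt hab.2.1)⟩)
  · exact fun p hpl => ⟨(hhead p hpl).1, (hhead p hpl).2.1⟩

lemma matrix_to_chain {n : ℕ} {l : List (ℕ × ℕ)} (h : IsPositiveIndexingMatrix n l) :
    Chain (R n) (0, 0) l := by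
  obtain ⟨⟨_, _, hmem, hpw⟩, hpos⟩ := h
  refine List.Pairwise.chain (List.pairwise_cons.mpr ⟨?_, ?_⟩)
  · exact fun q hq => ⟨(hpos q hq).1, (hpos q hq).2, (hmem q hq).2, (hmem q hq).1⟩
  · refine hpw.imp_of_mem (fun {a b} ha hb hab => ?_)
    refine ⟨hab.1, lt_of_le_of_ne hab.2.1 (fun he => ?_), (hmem b hb).2, (hmem b hb).1⟩
    exact absurd (hab.2.2 he) (by have := (hpos a ha).2; omega)
  
lemma chain_head_U {w : List DyckStep} (p : DyckWord) (hw : w = p.toList) :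
    ∀ x t, w = x :: t → x = U := by
  intro x t hxt
  have h2 : p.toList = x :: t := by rw [← hw, hxt]
  have h3 := p.count_D_le_count_U 1
  rw [h2, show (1 : ℕ) = 0 + 1 from rfl, take_succ_cons, take_zero] at h3
  cases x with
  | U => rfl
  | D => simp at h3

/-- The equivalence between Dyck words of semilength `n` and positive indexing
matrices-or-degenerate. -/
noncomputable def theEquiv (n : ℕ) :
    {p : DyckWord // p.semilength = n} ≃
      Option {l : List (ℕ × ℕ) // IsPositiveIndexingMatrix n l} where
  toFun := fun ⟨p, hp⟩ =>
    if h : parse 0 0 p.toList = [] then none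
    else
      have hch : Chain (R n) (0, 0) (parse 0 0 p.toList) := by
        refine (main n p.toList.length p.toList le_rfl 0 0 ?_ ?_ ?_ (chain_head_U p rfl)).2
        · simpa [DyckWord.semilength] using hp
        · have := p.count_U_eq_count_D
          simp only [zero_add]
          rw [← this]
          simpa [DyckWord.semilength] using hp
        · intro i
          simpa using p.count_D_le_count_U i
      some ⟨parse 0 0 p.toList, chain_to_matrix hch h⟩
  invFun := fun o =>
    let l := o.elim [] Subtype.val
    have hch : Chain (R n) (0, 0) l := by
      cases o with
      | none => exact Chain.nil
      | some lp => exact matrix_to_chain lp.2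
    ⟨⟨go n (0, 0) l, by
        obtain ⟨h1, h2⟩ := count_go n l 0 0 hch (Nat.zero_le n) le_rfl
        rw [h1, h2], fun i => by
        have := go_prefix n l 0 0 hch (Nat.zero_le n) le_rfl i
        simpa using this⟩, by
      obtain ⟨h1, _⟩ := count_go n l 0 0 hch (Nat.zero_le n) le_rfl
      show count U (go n (0, 0) l) = n
      rw [h1]; omega⟩
  left_inv := by
    rintro ⟨p, hp⟩
    have hch : Chain (R n) (0, 0) (parse 0 0 p.toList) := by
      refine (main n p.toList.length p.toList le_rfl 0 0 ?_ ?_ ?_ (chain_head_U p rfl)).2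
      · simpa [DyckWord.semilength] using hp
      · have := p.count_U_eq_count_D
        simp only [zero_add]
        rw [← this]
        simpa [DyckWord.semilength] using hp
      · intro i
        simpa using p.count_D_le_count_U i
    have hmain : go n (0, 0) (parse 0 0 p.toList) = p.toList := by
      refine (main n p.toList.length p.toList le_rfl 0 0 ?_ ?_ ?_ (chain_head_U p rfl)).1
      · simpa [DyckWord.semilength] using hp
      · have := p.count_U_eq_count_D
        simp only [zero_add]
        rw [← this]
        simpa [DyckWord.semilength] using hp
      · intro i
        simpa using p.count_D_le_count_U i
    by_cases h : parse 0 0 p.toList = []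
    · simp only [h, dif_pos]
      apply Subtype.ext
      apply DyckWord.ext
      show go n (0, 0) [] = p.toList
      rw [← h, hmain]
    · simp only [h, dif_neg, not_false_iff]
      apply Subtype.ext
      apply DyckWord.ext
      show go n (0, 0) (parse 0 0 p.toList) = p.toList
      exact hmain
  right_inv := by
    rintro (_ | ⟨l, hl⟩)
    · have : parse 0 0 (go n (0, 0) ([] : List (ℕ × ℕ))) = [] :=
        parse_go n [] 0 0 Chain.nil
      simp only [Option.elim]
      exact dif_pos this
    · have hch : Chain (R n) (0, 0) l := matrix_to_chain hl
      have hpg : parse 0 0 (go n (0, 0) l) = l := parse_go n l 0 0 hch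
      have hne : l ≠ [] := by
        intro h
        rw [h] at hl
        exact absurd hl.1.1 (by simp)
      simp only [Option.elim]
      refine (dif_neg (show ¬ parse 0 0 (go n (0, 0) l) = [] by rw [hpg]; exact hne)).trans ?_
      congr 1
      exact Subtype.ext hpg

end Stmt1Aux

/-- the number of positive indexing matrices (including the
degenerate one) is the `n`-th Catalan number. -/
theorem stmt1 (n : ℕ) (hn : 1 ≤ n) :
    Nat.card {l : List (ℕ × ℕ) // IsPositiveIndexingMatrix n l} + 1 =
      catalan n := by
  have e := (Stmt1Aux.theEquiv n).symm
  haveI : Finite (Option {l : List (ℕ × ℕ) // IsPositiveIndexingMatrix n l}) :=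
    Finite.of_equiv _ e.symm
  haveI : Finite {l : List (ℕ × ℕ) // IsPositiveIndexingMatrix n l} :=
    Finite.of_injective (some ·) (Option.some_injective _)
  calc Nat.card {l : List (ℕ × ℕ) // IsPositiveIndexingMatrix n l} + 1
      = Nat.card (Option {l : List (ℕ × ℕ) // IsPositiveIndexingMatrix n l}) :=
        (Finite.card_option).symm
    _ = Nat.card {p : DyckWord // p.semilength = n} := Nat.card_congr e
    _ = Fintype.card {p : DyckWord // p.semilength = n} := Nat.card_eq_fintype_card
    _ = catalan n := DyckWord.card_dyckWord_semilength_eq_catalan n
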